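/- The group obtained from the presentation of G(Ẽ₈^{(1,1)}) by adding the quadratic relations g² = 1 for every generator t₀, t₁, s₁, …, s₈ is isomorphic to the group obtained from the presentation of G'(Ẽ₈^{(1,1)}) by adding the quadratic relations tᵢ² = 1 for all i ∈ ℤ and sⱼ² = 1 for j ∈ {1,…,8} (both present the hyperbolic elliptic Weyl group Hyp(Ẽ₈^{(1,1)})). -/

import Mathlib

/-!
STATEMENT 11: The group obtained from the presentation of G(Ẽ₈^{(1,1)}) by adding the
quadratic relations g² = 1 for every generator is isomorphic to the group obtained
from the presentation of G'(Ẽ₈^{(1,1)}) by adding the quadratic relations tᵢ² = 1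
(i ∈ ℤ) and sⱼ² = 1; both present Hyp(Ẽ₈^{(1,1)}).
-/

namespace EllipticE8Hyp

/-- Generators of `G(Ẽ₈^{(1,1)})`: `Sum.inl i` is `tᵢ` (`i ∈ {0,1}`),
`Sum.inr j` is `s_(j+1)` (so `Sum.inr 0` is `s₁`, ..., `Sum.inr 7` is `s₈`). -/
abbrev GenG : Type := Fin 2 ⊕ Fin 8

/-- Generators of `G'(Ẽ₈^{(1,1)})`: `Sum.inl i` is `tᵢ` (`i ∈ ℤ`),
`Sum.inr j` is `s_(j+1)`. -/
abbrev GenG' : Type := ℤ ⊕ Fin 8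

/-- The braid relator `(aba)⁻¹(bab)` encoding the relation `aba = bab`. -/
def br {α : Type} (a b : FreeGroup α) : FreeGroup α := (a * b * a)⁻¹ * (b * a * b)

/-- The commutation relator `(ab)⁻¹(ba)` encoding the relation `ab = ba`. -/
def cm {α : Type} (a b : FreeGroup α) : FreeGroup α := (a * b)⁻¹ * (b * a)

/-- The pairs of (0-indexed) `s`-generators joined by an edge in the diagram,
i.e. satisfying a braid relation: (s₂,s₄), (s₃,s₅), (s₅,s₆), (s₆,s₇), (s₇,s₈). -/
def braidPairs : List (Fin 8 × Fin 8) := [(1, 3), (2, 4), (4, 5), (5, 6), (6, 7)]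

def tG (i : Fin 2) : FreeGroup GenG := FreeGroup.of (Sum.inl i)
def sG (j : Fin 8) : FreeGroup GenG := FreeGroup.of (Sum.inr j)

/-- Relators of the elliptic Dynkin presentation of `G(Ẽ₈^{(1,1)})`:
braid relations between `t₀, t₁` and `s₁, s₂, s₃`, braid relations along the edges
of the `s`-part of the diagram, the elliptic relations for `s₁, s₂, s₃`, and
commutation relations for all remaining pairs of distinct generators except `{t₀,t₁}`. -/
def relsG : Set (FreeGroup GenG) :=
  { r | (∃ i : Fin 2, ∃ j : Fin 8, j.val < 3 ∧ r = br (tG i) (sG j)) ∨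
        (∃ p ∈ braidPairs, r = br (sG p.1) (sG p.2)) ∨
        (∃ j : Fin 8, j.val < 3 ∧
          r = (sG j * tG 1 * tG 0 * sG j * tG 1 * tG 0)⁻¹ *
              (tG 1 * tG 0 * sG j * tG 1 * tG 0 * sG j)) ∨
        (∃ i j : Fin 8, i ≠ j ∧ (i, j) ∉ braidPairs ∧ (j, i) ∉ braidPairs ∧
          r = cm (sG i) (sG j)) ∨
        (∃ i : Fin 2, ∃ j : Fin 8, 3 ≤ j.val ∧ r = cm (tG i) (sG j)) }

def tG' (i : ℤ) : FreeGroup GenG' := FreeGroup.of (Sum.inl i)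
def sG' (j : Fin 8) : FreeGroup GenG' := FreeGroup.of (Sum.inr j)

/-- Relators of the new presentation of `G'(Ẽ₈^{(1,1)})`: braid relations between
every `tᵢ` (`i ∈ ℤ`) and `s₁, s₂, s₃`, the relations `tᵢtᵢ₋₁ = tⱼtⱼ₋₁`, braid relations
along the edges of the `s`-part of the diagram, commutation relations between the
remaining pairs of distinct `s`-generators, and commutation of every `tᵢ` with
`s₄, …, s₈`. -/
def relsG' : Set (FreeGroup GenG') :=
  { r | (∃ i : ℤ, ∃ j : Fin 8, j.val < 3 ∧ r = br (tG' i) (sG' j)) ∨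
        (∃ i j : ℤ, r = (tG' i * tG' (i - 1))⁻¹ * (tG' j * tG' (j - 1))) ∨
        (∃ p ∈ braidPairs, r = br (sG' p.1) (sG' p.2)) ∨
        (∃ i j : Fin 8, i ≠ j ∧ (i, j) ∉ braidPairs ∧ (j, i) ∉ braidPairs ∧
          r = cm (sG' i) (sG' j)) ∨
        (∃ i : ℤ, ∃ j : Fin 8, 3 ≤ j.val ∧ r = cm (tG' i) (sG' j)) }

/-- Relators of the `G`-presentation together with the quadratic relators `g² = 1`
for every generator. -/
def relsHypG : Set (FreeGroup GenG) :=
  relsG ∪ { r | ∃ x : GenG, r = (FreeGroup.of x) ^ 2 }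

/-- Relators of the `G'`-presentation together with the quadratic relators `tᵢ² = 1`
for all `i ∈ ℤ` and `sⱼ² = 1` for all `j`. -/
def relsHypG' : Set (FreeGroup GenG') :=
  relsG' ∪ { r | ∃ x : GenG', r = (FreeGroup.of x) ^ 2 }

/-! ### auxiliary abstract lemmas -/

section Abstract
variable {G : Type*} [Group G]

private lemma tail_sq {s : G} (h : s * s = 1) : ∀ x : G, s * (s * x) = x := fun x => by
  rw [← mul_assoc, h, one_mul]

private lemma tail_braid {s u : G} (h : s * u * s = u * s * u) :
    ∀ x : G, s * (u * (s * x)) = u * (s * (u * x)) := fun x => by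
  calc s * (u * (s * x)) = s * u * s * x := by simp [mul_assoc]
    _ = u * s * u * x := by rw [h]
    _ = u * (s * (u * x)) := by simp [mul_assoc]

private lemma braid_up {s u v : G} (hs : s * s = 1) (hu : u * u = 1) (hv : v * v = 1)
    (bu : s * u * s = u * s * u) (bv : s * v * s = v * s * v)
    (ell : s * (v * u) * s * (v * u) = v * u * s * (v * u) * s) :
    s * (v * u * v) * s = v * u * v * s * (v * u * v) := by
  have hs' := tail_sq hs
  have hu' := tail_sq hu
  have bu' := tail_braid bu
  have bv' := tail_braid bv
  have ell' : ∀ x : G, s * (v * (u * (s * (v * (u * x))))) =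
      v * (u * (s * (v * (u * (s * x))))) := fun x => by
    calc s * (v * (u * (s * (v * (u * x))))) = s * (v * u) * s * (v * u) * x := by
          simp [mul_assoc]
      _ = v * u * s * (v * u) * s * x := by rw [ell]
      _ = v * (u * (s * (v * (u * (s * x))))) := by simp [mul_assoc]
  have J : ∀ z : G, v * (s * (v * (s * z))) = s * (v * z) := fun z => by
    rw [← bv' (s * z), hs' z]
  have E : ∀ x : G, s * (v * (u * (v * (s * (v * (s * (u * x))))))) =
      v * (u * (v * (s * (v * (s * (u * (s * x))))))) := fun x => by
    calc s * (v * (u * (v * (s * (v * (s * (u * x)))))))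
        = s * (v * (u * (s * (v * (u * x))))) := by rw [J (u * x)]
      _ = v * (u * (s * (v * (u * (s * x))))) := ell' x
      _ = v * (u * (v * (s * (v * (s * (u * (s * x))))))) := by rw [J (u * (s * x))]
  calc s * (v * u * v) * s
      = s * (v * (u * (v * (s * (v * (s * (u * (u * (s * v))))))))) := by
        simp only [mul_assoc, hu', hs', hv, mul_one]
    _ = v * (u * (v * (s * (v * (s * (u * (s * (u * (s * v))))))))) := E (u * (s * v))
    _ = v * u * v * s * (v * u * v) := by
        rw [bu' (u * (s * v))]
        simp only [mul_assoc, hu', hs']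

private lemma braid_down {s u v : G} (hs : s * s = 1) (hu : u * u = 1) (hv : v * v = 1)
    (bu : s * u * s = u * s * u) (bv : s * v * s = v * s * v)
    (ell : s * (v * u) * s * (v * u) = v * u * s * (v * u) * s) :
    s * (u * v * u) * s = u * v * u * s * (u * v * u) := by
  have hs' := tail_sq hs
  have hu' := tail_sq hu
  have hv' := tail_sq hv
  have bu' := tail_braid bu
  have bv' := tail_braid bv
  have ell' : ∀ x : G, s * (v * (u * (s * (v * (u * x))))) =
      v * (u * (s * (v * (u * (s * x))))) := fun x => by
    calc s * (v * (u * (s * (v * (u * x))))) = s * (v * u) * s * (v * u) * x := by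
          simp [mul_assoc]
      _ = v * u * s * (v * u) * s * x := by rw [ell]
      _ = v * (u * (s * (v * (u * (s * x))))) := by simp [mul_assoc]
  have J : ∀ z : G, v * (s * (v * (s * z))) = s * (v * z) := fun z => by
    rw [← bv' (s * z), hs' z]
  have A : ∀ x : G, s * (u * (s * (u * (v * (u * x))))) = u * (s * (v * (u * x))) :=
    fun x => by rw [bu' (u * (v * (u * x))), hu' (v * (u * x))]
  have E2 : ∀ x : G, s * (v * (s * (u * (s * (u * (v * (u * x))))))) =
      v * (s * (u * (s * (u * (v * (u * (s * x))))))) := fun x => by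
    calc s * (v * (s * (u * (s * (u * (v * (u * x)))))))
        = s * (v * (u * (s * (v * (u * x))))) := by rw [A x]
      _ = v * (u * (s * (v * (u * (s * x))))) := ell' x
      _ = v * (s * (u * (s * (u * (v * (u * (s * x))))))) := by rw [A (s * x)]
  have key : ∀ x : G, s * (u * (v * (u * (s * (u * (v * (u * x))))))) = u * (v * (u * (s * x))) :=
    fun x => by
      have h := congrArg (fun z => s * (u * (s * (v * z)))) (E2 x)
      rw [J (u * (s * (u * (v * (u * x)))))] at h
      rw [hs' (v * (u * (s * (u * (v * (u * x))))))] at h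
      rw [hv' (s * (u * (s * (u * (v * (u * (s * x)))))))] at h
      rw [hs' (u * (s * (u * (v * (u * (s * x))))))] at h
      rw [hu' (s * (u * (v * (u * (s * x)))))] at h
      rw [hs' (u * (v * (u * (s * x))))] at h
      exact h
  have K := key s
  rw [hs, mul_one] at K
  have K2 := congrArg (fun z => s * z) K
  rw [hs' (u * (v * (u * (s * (u * (v * (u * s)))))))] at K2
  have K3 := congrArg (fun z => z * s) K2.symm
  calc s * (u * v * u) * s = s * (u * (v * u)) * s := by simp [mul_assoc]
    _ = u * (v * (u * (s * (u * (v * (u * (s * s))))))) := by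
        rw [K3]; simp [mul_assoc]
    _ = u * v * u * s * (u * v * u) := by
        simp only [mul_assoc, hs, mul_one]

private lemma ell_of_braids {s t0 t1 t2 : G}
    (b0 : s * t0 * s = t0 * s * t0) (b1 : s * t1 * s = t1 * s * t1)
    (b2 : s * t2 * s = t2 * s * t2) (hc : t2 * t1 = t1 * t0) :
    s * t1 * t0 * s * t1 * t0 = t1 * t0 * s * t1 * t0 * s := by
  have b0' := tail_braid b0
  have b1' := tail_braid b1
  have b2' := tail_braid b2
  have hc' : ∀ x : G, t2 * (t1 * x) = t1 * (t0 * x) := fun x => by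
    rw [← mul_assoc, ← mul_assoc, hc]
  have main : ∀ x : G, s * (t1 * (t0 * (s * (t1 * (t0 * x))))) =
      t1 * (t0 * (s * (t1 * (t0 * (s * x))))) := fun x => by
    calc s * (t1 * (t0 * (s * (t1 * (t0 * x)))))
        = s * (t2 * (t1 * (s * (t1 * (t0 * x))))) := by rw [hc' (s * (t1 * (t0 * x)))]
      _ = s * (t2 * (s * (t1 * (s * (t0 * x))))) := by rw [← b1' (t0 * x)]
      _ = t2 * (s * (t2 * (t1 * (s * (t0 * x))))) := by rw [b2' (t1 * (s * (t0 * x)))]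
      _ = t2 * (s * (t1 * (t0 * (s * (t0 * x))))) := by rw [hc' (s * (t0 * x))]
      _ = t2 * (s * (t1 * (s * (t0 * (s * x))))) := by rw [← b0' x]
      _ = t2 * (t1 * (s * (t1 * (t0 * (s * x))))) := by rw [b1' (t0 * (s * x))]
      _ = t1 * (t0 * (s * (t1 * (t0 * (s * x))))) := by rw [hc' (s * (t1 * (t0 * (s * x))))]
  have h := main 1
  simp only [mul_one] at h
  calc s * t1 * t0 * s * t1 * t0 = s * (t1 * (t0 * (s * (t1 * t0)))) := by simp [mul_assoc]
    _ = t1 * (t0 * (s * (t1 * (t0 * s)))) := h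
    _ = t1 * t0 * s * t1 * t0 * s := by simp [mul_assoc]
end Abstract

/-! ### extraction helpers -/

section Extract
variable {α : Type} {rels : Set (FreeGroup α)}

private lemma rel_eq {r : FreeGroup α} (h : r ∈ rels) : PresentedGroup.mk rels r = 1 :=
  (QuotientGroup.eq_one_iff r).mpr (Subgroup.subset_normalClosure h)

private lemma braid_rel {x y : FreeGroup α} (h : br x y ∈ rels) :
    PresentedGroup.mk rels x * PresentedGroup.mk rels y * PresentedGroup.mk rels x =
      PresentedGroup.mk rels y * PresentedGroup.mk rels x * PresentedGroup.mk rels y := by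
  have h1 := rel_eq h
  simp only [br, map_mul, map_inv] at h1
  rwa [inv_mul_eq_one] at h1

private lemma comm_rel {x y : FreeGroup α} (h : cm x y ∈ rels) :
    PresentedGroup.mk rels x * PresentedGroup.mk rels y =
      PresentedGroup.mk rels y * PresentedGroup.mk rels x := by
  have h1 := rel_eq h
  simp only [cm, map_mul, map_inv] at h1
  rwa [inv_mul_eq_one] at h1

private lemma sq_rel {x : α} (h : (FreeGroup.of x) ^ 2 ∈ rels) :
    (PresentedGroup.of x : PresentedGroup rels) * PresentedGroup.of x = 1 := by
  have h1 := rel_eq h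
  rwa [map_pow, pow_two] at h1
end Extract

/-! ### the group `H = PresentedGroup relsHypG` -/

abbrev H : Type := PresentedGroup relsHypG
abbrev H' : Type := PresentedGroup relsHypG'

def ta : H := PresentedGroup.of (Sum.inl 0)
def tb : H := PresentedGroup.of (Sum.inl 1)
def sa (j : Fin 8) : H := PresentedGroup.of (Sum.inr j)
def cH : H := tb * ta
def T (i : ℤ) : H := cH ^ i * ta

lemma sq_ta : ta * ta = 1 := sq_rel (Set.mem_union_right _ ⟨Sum.inl 0, rfl⟩)
lemma sq_tb : tb * tb = 1 := sq_rel (Set.mem_union_right _ ⟨Sum.inl 1, rfl⟩)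
lemma sq_sa (j : Fin 8) : sa j * sa j = 1 := sq_rel (Set.mem_union_right _ ⟨Sum.inr j, rfl⟩)

lemma braid_ta (j : Fin 8) (hj : j.val < 3) : ta * sa j * ta = sa j * ta * sa j :=
  braid_rel (Set.mem_union_left _ (Or.inl ⟨0, j, hj, rfl⟩))

lemma braid_tb (j : Fin 8) (hj : j.val < 3) : tb * sa j * tb = sa j * tb * sa j :=
  braid_rel (Set.mem_union_left _ (Or.inl ⟨1, j, hj, rfl⟩))

lemma braid_ss (p : Fin 8 × Fin 8) (hp : p ∈ braidPairs) :
    sa p.1 * sa p.2 * sa p.1 = sa p.2 * sa p.1 * sa p.2 :=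
  braid_rel (Set.mem_union_left _ (Or.inr (Or.inl ⟨p, hp, rfl⟩)))

lemma comm_ss (i j : Fin 8) (hij : i ≠ j) (h1 : (i, j) ∉ braidPairs) (h2 : (j, i) ∉ braidPairs) :
    sa i * sa j = sa j * sa i :=
  comm_rel (Set.mem_union_left _ (Or.inr (Or.inr (Or.inr (Or.inl ⟨i, j, hij, h1, h2, rfl⟩)))))

lemma comm_ta_sa (j : Fin 8) (hj : 3 ≤ j.val) : ta * sa j = sa j * ta :=
  comm_rel (Set.mem_union_left _ (Or.inr (Or.inr (Or.inr (Or.inr ⟨0, j, hj, rfl⟩)))))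

lemma comm_tb_sa (j : Fin 8) (hj : 3 ≤ j.val) : tb * sa j = sa j * tb :=
  comm_rel (Set.mem_union_left _ (Or.inr (Or.inr (Or.inr (Or.inr ⟨1, j, hj, rfl⟩)))))

lemma ellH (j : Fin 8) (hj : j.val < 3) :
    sa j * cH * sa j * cH = cH * sa j * cH * sa j := by
  have hm : (sG j * tG 1 * tG 0 * sG j * tG 1 * tG 0)⁻¹ *
      (tG 1 * tG 0 * sG j * tG 1 * tG 0 * sG j) ∈ relsHypG :=
    Set.mem_union_left _ (Or.inr (Or.inr (Or.inl ⟨j, hj, rfl⟩)))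
  have h1 := rel_eq hm
  simp only [map_mul, map_inv] at h1
  rw [inv_mul_eq_one] at h1
  show sa j * (tb * ta) * sa j * (tb * ta) = (tb * ta) * sa j * (tb * ta) * sa j
  simp only [mul_assoc] at h1 ⊢
  exact h1

lemma inv_ta : ta⁻¹ = ta := inv_eq_of_mul_eq_one_right sq_ta
lemma inv_tb : tb⁻¹ = tb := inv_eq_of_mul_eq_one_right sq_tb

lemma conj_c (k : ℤ) : ta * cH ^ k * ta = cH ^ (-k) := by
  have h1 : ta * cH * ta⁻¹ = cH⁻¹ := by
    rw [inv_ta]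
    show ta * (tb * ta) * ta = (tb * ta)⁻¹
    rw [mul_inv_rev, inv_ta, inv_tb]
    calc ta * (tb * ta) * ta = ta * tb * (ta * ta) := by group
      _ = ta * tb := by rw [sq_ta, mul_one]
  have h2 : ta * cH ^ k * ta⁻¹ = (ta * cH * ta⁻¹) ^ k := by
    simpa [MulAut.conj_apply] using (map_zpow (MulAut.conj ta) cH k).symm
  calc ta * cH ^ k * ta = ta * cH ^ k * ta⁻¹ := by rw [inv_ta]
    _ = (ta * cH * ta⁻¹) ^ k := h2
    _ = (cH⁻¹) ^ k := by rw [h1]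
    _ = cH ^ (-k) := by group

lemma sqT (i : ℤ) : T i * T i = 1 := by
  calc T i * T i = cH ^ i * (ta * cH ^ i * ta) := by simp only [T]; group
    _ = cH ^ i * cH ^ (-i) := by rw [conj_c]
    _ = 1 := by group

lemma TT (i : ℤ) : T i * T (i - 1) = cH := by
  calc T i * T (i - 1) = cH ^ i * (ta * cH ^ (i - 1) * ta) := by simp only [T]; group
    _ = cH ^ i * cH ^ (-(i - 1)) := by rw [conj_c]
    _ = cH ^ (1 : ℤ) := by group
    _ = cH := zpow_one cH

lemma TTc (i : ℤ) : T (i + 1) * T i = cH := by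
  have := TT (i + 1)
  rwa [add_sub_cancel_right] at this

lemma T0 : T 0 = ta := by simp [T]

lemma T1 : T 1 = tb := by
  show cH ^ (1 : ℤ) * ta = tb
  rw [zpow_one]
  show tb * ta * ta = tb
  rw [mul_assoc, sq_ta, mul_one]

lemma Tvuv (i : ℤ) : T (i + 1) * T i * T (i + 1) = T (i + 2) := by
  calc T (i + 1) * T i * T (i + 1) = cH * T (i + 1) := by rw [TTc]
    _ = cH ^ (1 : ℤ) * (cH ^ (i + 1) * ta) := by rw [zpow_one]; rfl
    _ = cH ^ (i + 2) * ta := by group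
    _ = T (i + 2) := rfl

lemma Tuvu (i : ℤ) : T i * T (i + 1) * T i = T (i - 1) := by
  calc T i * T (i + 1) * T i = cH ^ i * (ta * cH ^ (i + 1) * ta) * (cH ^ i * ta) := by
        simp only [T]; group
    _ = cH ^ i * cH ^ (-(i + 1)) * (cH ^ i * ta) := by rw [conj_c]
    _ = cH ^ (i - 1) * ta := by group
    _ = T (i - 1) := rfl

/-- the braid relations for all `tᵢ`, `i ∈ ℤ`, by induction. -/
lemma braidT : ∀ (i : ℤ) (j : Fin 8), j.val < 3 →
    sa j * T i * sa j = T i * sa j * T i := by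
  set P : ℤ → Prop := fun i => ∀ j : Fin 8, j.val < 3 → sa j * T i * sa j = T i * sa j * T i
    with hP
  have ellT : ∀ (i : ℤ) (j : Fin 8), j.val < 3 →
      sa j * (T (i + 1) * T i) * sa j * (T (i + 1) * T i) =
        T (i + 1) * T i * sa j * (T (i + 1) * T i) * sa j := by
    intro i j hj
    rw [TTc i]
    exact ellH j hj
  have step_up : ∀ i : ℤ, P i → P (i + 1) → P (i + 2) := by
    intro i h1 h2 j hj
    rw [← Tvuv i]
    exact braid_up (sq_sa j) (sqT i) (sqT (i + 1)) (h1 j hj) (h2 j hj) (ellT i j hj)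
  have step_down : ∀ i : ℤ, P i → P (i + 1) → P (i - 1) := by
    intro i h1 h2 j hj
    rw [← Tuvu i]
    exact braid_down (sq_sa j) (sqT i) (sqT (i + 1)) (h1 j hj) (h2 j hj) (ellT i j hj)
  have base0 : P 0 := by
    intro j hj
    rw [T0]
    exact (braid_ta j hj).symm
  have base1 : P 1 := by
    intro j hj
    rw [T1]
    exact (braid_tb j hj).symm
  have main : ∀ i : ℤ, P i ∧ P (i + 1) := by
    intro i
    induction i using Int.induction_on with
    | zero => exact ⟨base0, base1⟩
    | succ i ih =>
        refine ⟨ih.2, ?_⟩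
        rw [show ((i : ℤ) + 1 + 1) = (i : ℤ) + 2 by ring]
        exact step_up i ih.1 ih.2
    | pred i ih =>
        constructor
        · rw [show (-(i : ℤ) - 1) = (-(i : ℤ) - 1) from rfl]
          have := step_down (-(i : ℤ)) ih.1 ih.2
          rwa [show (-(i : ℤ) - 1) = -(i : ℤ) - 1 from rfl]
        · rw [show (-(i : ℤ) - 1 + 1) = -(i : ℤ) by ring]
          exact ih.1
  exact fun i => (main i).1

lemma commT (i : ℤ) (j : Fin 8) (hj : 3 ≤ j.val) : T i * sa j = sa j * T i := by
  have ha : Commute ta (sa j) := comm_ta_sa j hj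
  have hb : Commute tb (sa j) := comm_tb_sa j hj
  have hc : Commute cH (sa j) := hb.mul_left ha
  exact ((hc.zpow_left i).mul_left ha : Commute (cH ^ i * ta) (sa j))

/-! ### the group `H'` -/

def t' (i : ℤ) : H' := PresentedGroup.of (Sum.inl i)
def s' (j : Fin 8) : H' := PresentedGroup.of (Sum.inr j)

lemma sq_t' (i : ℤ) : t' i * t' i = 1 := sq_rel (Set.mem_union_right _ ⟨Sum.inl i, rfl⟩)
lemma sq_s' (j : Fin 8) : s' j * s' j = 1 := sq_rel (Set.mem_union_right _ ⟨Sum.inr j, rfl⟩)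

lemma braid_t' (i : ℤ) (j : Fin 8) (hj : j.val < 3) :
    t' i * s' j * t' i = s' j * t' i * s' j :=
  braid_rel (Set.mem_union_left _ (Or.inl ⟨i, j, hj, rfl⟩))

lemma chain' (i j : ℤ) : t' i * t' (i - 1) = t' j * t' (j - 1) := by
  have hm : (tG' i * tG' (i - 1))⁻¹ * (tG' j * tG' (j - 1)) ∈ relsHypG' :=
    Set.mem_union_left _ (Or.inr (Or.inl ⟨i, j, rfl⟩))
  have h1 := rel_eq hm
  simp only [map_mul, map_inv] at h1
  rwa [inv_mul_eq_one] at h1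

lemma braid_ss' (p : Fin 8 × Fin 8) (hp : p ∈ braidPairs) :
    s' p.1 * s' p.2 * s' p.1 = s' p.2 * s' p.1 * s' p.2 :=
  braid_rel (Set.mem_union_left _ (Or.inr (Or.inr (Or.inl ⟨p, hp, rfl⟩))))

lemma comm_ss' (i j : Fin 8) (hij : i ≠ j) (h1 : (i, j) ∉ braidPairs) (h2 : (j, i) ∉ braidPairs) :
    s' i * s' j = s' j * s' i :=
  comm_rel (Set.mem_union_left _ (Or.inr (Or.inr (Or.inr (Or.inl ⟨i, j, hij, h1, h2, rfl⟩)))))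

lemma comm_ts' (i : ℤ) (j : Fin 8) (hj : 3 ≤ j.val) : t' i * s' j = s' j * t' i :=
  comm_rel (Set.mem_union_left _ (Or.inr (Or.inr (Or.inr (Or.inr ⟨i, j, hj, rfl⟩)))))

/-- elliptic relation holds in `H'`. -/
lemma ellH' (j : Fin 8) (hj : j.val < 3) :
    s' j * t' 1 * t' 0 * s' j * t' 1 * t' 0 = t' 1 * t' 0 * s' j * t' 1 * t' 0 * s' j := by
  have hc : t' 2 * t' 1 = t' 1 * t' 0 := by
    have := chain' 2 1
    norm_num at this
    exact this
  exact ell_of_braids (braid_t' 0 j hj).symm (braid_t' 1 j hj).symm (braid_t' 2 j hj).symm hc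

lemma hstep' (k : ℤ) : t' (k + 1) = t' 1 * t' 0 * t' k := by
  have h := chain' (k + 1) 1
  rw [add_sub_cancel_right] at h
  norm_num at h
  calc t' (k + 1) = t' (k + 1) * (t' k * t' k) := by rw [sq_t', mul_one]
    _ = t' (k + 1) * t' k * t' k := by group
    _ = t' 1 * t' 0 * t' k := by rw [h]

lemma tpow : ∀ i : ℤ, (t' 1 * t' 0) ^ i * t' 0 = t' i := by
  intro i
  induction i using Int.induction_on with
  | zero => simp
  | succ i ih =>
      calc (t' 1 * t' 0) ^ ((i : ℤ) + 1) * t' 0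
          = (t' 1 * t' 0) * ((t' 1 * t' 0) ^ (i : ℤ) * t' 0) := by group
        _ = t' 1 * t' 0 * t' i := by rw [ih]
        _ = t' ((i : ℤ) + 1) := (hstep' i).symm
  | pred i ih =>
      set C := t' 1 * t' 0 with hC
      have h := hstep' (-(i : ℤ) - 1)
      rw [show (-(i : ℤ) - 1 + 1) = -(i : ℤ) by ring] at h
      have h2 : C⁻¹ * t' (-(i : ℤ)) = t' (-(i : ℤ) - 1) := by
        rw [h, ← hC]; group
      calc C ^ (-(i : ℤ) - 1) * t' 0
          = C⁻¹ * (C ^ (-(i : ℤ)) * t' 0) := by group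
        _ = C⁻¹ * t' (-(i : ℤ)) := by rw [ih]
        _ = t' (-(i : ℤ) - 1) := h2

/-! ### the two homomorphisms -/

def fφ : GenG → H' := fun x =>
  match x with
  | Sum.inl i => t' (i.val : ℤ)
  | Sum.inr j => s' j

lemma φcheck : ∀ r ∈ relsHypG, FreeGroup.lift fφ r = 1 := by
  intro r hr
  rcases hr with hr | hr
  · simp only [relsG, Set.mem_setOf_eq] at hr
    rcases hr with ⟨i, j, hj, rfl⟩ | ⟨p, hp, rfl⟩ | ⟨j, hj, rfl⟩ |
      ⟨i, j, hij, h1, h2, rfl⟩ | ⟨i, j, hj, rfl⟩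
    · simp only [br, tG, sG, map_mul, map_inv, FreeGroup.lift_apply_of, fφ]
      rw [inv_mul_eq_one]
      exact braid_t' (i.val : ℤ) j hj
    · simp only [br, sG, map_mul, map_inv, FreeGroup.lift_apply_of, fφ]
      rw [inv_mul_eq_one]
      exact braid_ss' p hp
    · simp only [tG, sG, map_mul, map_inv, FreeGroup.lift_apply_of, fφ]
      rw [inv_mul_eq_one]
      have := ellH' j hj
      norm_num
      convert this using 2 <;> norm_num
    · simp only [cm, sG, map_mul, map_inv, FreeGroup.lift_apply_of, fφ]
      rw [inv_mul_eq_one]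
      exact comm_ss' i j hij h1 h2
    · simp only [cm, tG, sG, map_mul, map_inv, FreeGroup.lift_apply_of, fφ]
      rw [inv_mul_eq_one]
      exact comm_ts' (i.val : ℤ) j hj
  · obtain ⟨x, rfl⟩ := hr
    rw [map_pow, pow_two]
    cases x with
    | inl i => simpa [fφ, FreeGroup.lift_apply_of] using sq_t' (i.val : ℤ)
    | inr j => simpa [fφ, FreeGroup.lift_apply_of] using sq_s' j

def fψ : GenG' → H := fun x =>
  match x with
  | Sum.inl i => T i
  | Sum.inr j => sa j

lemma ψcheck : ∀ r ∈ relsHypG', FreeGroup.lift fψ r = 1 := by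
  intro r hr
  rcases hr with hr | hr
  · simp only [relsG', Set.mem_setOf_eq] at hr
    rcases hr with ⟨i, j, hj, rfl⟩ | ⟨i, j, rfl⟩ | ⟨p, hp, rfl⟩ |
      ⟨i, j, hij, h1, h2, rfl⟩ | ⟨i, j, hj, rfl⟩
    · simp only [br, tG', sG', map_mul, map_inv, FreeGroup.lift_apply_of, fψ]
      rw [inv_mul_eq_one]
      exact (braidT i j hj).symm
    · simp only [tG', map_mul, map_inv, FreeGroup.lift_apply_of, fψ]
      rw [inv_mul_eq_one]
      rw [TT i, TT j]
    · simp only [br, sG', map_mul, map_inv, FreeGroup.lift_apply_of, fψ]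
      rw [inv_mul_eq_one]
      exact braid_ss p hp
    · simp only [cm, sG', map_mul, map_inv, FreeGroup.lift_apply_of, fψ]
      rw [inv_mul_eq_one]
      exact comm_ss i j hij h1 h2
    · simp only [cm, tG', sG', map_mul, map_inv, FreeGroup.lift_apply_of, fψ]
      rw [inv_mul_eq_one]
      exact commT i j hj
  · obtain ⟨x, rfl⟩ := hr
    rw [map_pow, pow_two]
    cases x with
    | inl i => simpa [fψ, FreeGroup.lift_apply_of] using sqT i
    | inr j => simpa [fψ, FreeGroup.lift_apply_of] using sq_sa j

def φ : H →* H' := PresentedGroup.toGroup φcheck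
def ψ : H' →* H := PresentedGroup.toGroup ψcheck

lemma φ_of (x : GenG) : φ (PresentedGroup.of x) = fφ x := PresentedGroup.toGroup.of φcheck
lemma ψ_of (x : GenG') : ψ (PresentedGroup.of x) = fψ x := PresentedGroup.toGroup.of ψcheck

lemma ψφ : ψ.comp φ = MonoidHom.id H := by
  apply PresentedGroup.ext
  intro x
  cases x with
  | inl i =>
      fin_cases i
      · show ψ (φ ta) = ta
        rw [show φ ta = t' ((0 : Fin 2).val : ℤ) from φ_of (Sum.inl 0)]
        norm_num
        show ψ (PresentedGroup.of (Sum.inl (0 : ℤ))) = ta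
        rw [ψ_of]
        show T 0 = ta
        exact T0
      · show ψ (φ tb) = tb
        rw [show φ tb = t' ((1 : Fin 2).val : ℤ) from φ_of (Sum.inl 1)]
        norm_num
        show ψ (PresentedGroup.of (Sum.inl (1 : ℤ))) = tb
        rw [ψ_of]
        show T 1 = tb
        exact T1
  | inr j =>
      show ψ (φ (sa j)) = sa j
      rw [show φ (sa j) = s' j from φ_of (Sum.inr j)]
      exact ψ_of (Sum.inr j)

lemma φψ : φ.comp ψ = MonoidHom.id H' := by
  apply PresentedGroup.ext
  intro x
  cases x with
  | inl i =>
      show φ (ψ (t' i)) = t' i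
      rw [show ψ (t' i) = T i from ψ_of (Sum.inl i)]
      show φ (cH ^ i * ta) = t' i
      rw [map_mul, map_zpow]
      have hca : φ ta = t' 0 := by
        have := φ_of (Sum.inl 0)
        simpa [fφ, ta] using this
      have hcb : φ tb = t' 1 := by
        have := φ_of (Sum.inl 1)
        simpa [fφ, tb] using this
      have hc : φ cH = t' 1 * t' 0 := by
        show φ (tb * ta) = t' 1 * t' 0
        rw [map_mul, hca, hcb]
      rw [hc, hca]
      exact tpow i
  | inr j =>
      show φ (ψ (s' j)) = s' j
      rw [show ψ (s' j) = sa j from ψ_of (Sum.inr j)]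
      exact φ_of (Sum.inr j)

theorem Hyp_iso : Nonempty (PresentedGroup relsHypG ≃* PresentedGroup relsHypG') := by
  exact ⟨MonoidHom.toMulEquiv φ ψ ψφ φψ⟩

end EllipticE8Hyp
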